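/- For all integers d ≥ 8 and n satisfying n ≥ 2d and n ≥ d + 131072, the inequality (n-d)^{log₂(16 + (d-1)/8)} + 2·(⌊n/2⌋ - d)^{log₂(16 + d/8)} + 2 ≤ (n-d)^{log₂(16 + d/8)} holds. -/

import Mathlib

lemma poly_key (s : ℝ) (h0 : 0 ≤ s) (h1 : s ≤ 1/136) :
    (1-s)^17 + 16*s + 100*s^3 ≤ 1 := by
  have hs1 : s ≤ 1 := by linarith
  have h4 : (1-s)^4 ≤ 1 - 4*s + 6*s^2 := by
    nlinarith [mul_nonneg (mul_nonneg (mul_nonneg h0 h0) h0) (show (0:ℝ) ≤ 4 - s by linarith)]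
  have h4' : (0:ℝ) ≤ (1-s)^4 := by positivity
  have h8 : (1-s)^8 ≤ 1 - 8*s + 28*s^2 := by
    have := pow_le_pow_left₀ h4' h4 2
    nlinarith [mul_nonneg (mul_nonneg (mul_nonneg h0 h0) h0) (show (0:ℝ) ≤ 48 - 36*s by linarith)]
  have h8' : (0:ℝ) ≤ (1-s)^8 := by positivity
  have h16 : (1-s)^16 ≤ 1 - 16*s + 120*s^2 := by
    have := pow_le_pow_left₀ h8' h8 2
    nlinarith [mul_nonneg (mul_nonneg (mul_nonneg h0 h0) h0) (show (0:ℝ) ≤ 448 - 784*s by linarith)]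
  have h17 : (1-s)^17 ≤ (1 - 16*s + 120*s^2) * (1-s) := by
    have hs' : (0:ℝ) ≤ 1 - s := by linarith
    calc (1-s)^17 = (1-s)^16 * (1-s) := by ring
    _ ≤ (1 - 16*s + 120*s^2) * (1-s) := by
        apply mul_le_mul_of_nonneg_right h16 hs'
  nlinarith [h17, mul_nonneg (mul_nonneg h0 h0) h0, sq_nonneg s,
    mul_nonneg (mul_nonneg h0 h0) (show (0:ℝ) ≤ 1 - 136*s by linarith)]

theorem inductive_step_8_16 (d n : ℕ) (hd : 8 ≤ d) (hn2d : 2 * d ≤ n)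
    (hn : d + 131072 ≤ n) :
    ((n : ℝ) - d) ^ Real.logb 2 (16 + ((d : ℝ) - 1) / 8)
      + 2 * (((n / 2 : ℕ) : ℝ) - d) ^ Real.logb 2 (16 + (d : ℝ) / 8) + 2
    ≤ ((n : ℝ) - d) ^ Real.logb 2 (16 + (d : ℝ) / 8) := by
  have hd' : (8:ℝ) ≤ (d:ℕ) := by exact_mod_cast hd
  have hn' : (d:ℝ) + 131072 ≤ (n:ℝ) := by exact_mod_cast hn
  set b : ℝ := 16 + (d:ℝ)/8 with hb
  set a : ℝ := 16 + ((d:ℝ)-1)/8 with ha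
  have hb17 : (17:ℝ) ≤ b := by rw [hb]; linarith
  have hbpos : (0:ℝ) < b := by linarith
  have hapos : (0:ℝ) < a := by rw [ha]; linarith
  have hab : a ≤ b := by rw [ha, hb]; linarith
  set s : ℝ := 1/(8*b) with hs
  have hspos : (0:ℝ) < s := by positivity
  have hsle : s ≤ 1/136 := by
    rw [hs]; rw [div_le_div_iff₀ (by positivity) (by norm_num)]; linarith
  set X : ℝ := (n:ℝ) - d with hX
  have hX17 : (2:ℝ)^(17:ℕ) ≤ X := by rw [hX]; norm_num; linarith
  have hXpos : (0:ℝ) < X := by nlinarith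
  set p : ℝ := Real.logb 2 b with hp
  set q : ℝ := Real.logb 2 a with hq
  have h2p : (2:ℝ) ^ p = b := Real.rpow_logb (by norm_num) (by norm_num) hbpos
  have h2q : (2:ℝ) ^ q = a := Real.rpow_logb (by norm_num) (by norm_num) hapos
  have hp0 : 0 ≤ p := Real.logb_nonneg (by norm_num) (by linarith)
  have hq0 : 0 ≤ q := Real.logb_nonneg (by norm_num) (by rw [ha]; linarith)
  have hpq : q ≤ p := by rw [hp, hq]; gcongr <;> norm_num
  -- b^17 ≤ X^p
  have hXp_big : b ^ (17:ℕ) ≤ X ^ p := by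
    calc b ^ (17:ℕ) = ((2:ℝ) ^ p) ^ (17:ℕ) := by rw [h2p]
    _ = ((2:ℝ) ^ p) ^ ((17:ℕ):ℝ) := by rw [Real.rpow_natCast]
    _ = (2:ℝ) ^ (p * (17:ℕ)) := by rw [← Real.rpow_mul (by norm_num)]
    _ = ((2:ℝ) ^ ((17:ℕ):ℝ)) ^ p := by rw [mul_comm, Real.rpow_mul (by norm_num)]
    _ = ((2:ℝ) ^ (17:ℕ)) ^ p := by rw [Real.rpow_natCast]
    _ ≤ X ^ p := Real.rpow_le_rpow (by positivity) hX17 hp0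
  -- first term: X^q ≤ X^p * (a/b)^17
  have hfirst : X ^ q ≤ X ^ p * (a/b) ^ (17:ℕ) := by
    have hba : (b/a) ^ (17:ℕ) ≤ X ^ (p - q) := by
      calc (b/a) ^ (17:ℕ) = ((2:ℝ) ^ (p-q)) ^ (17:ℕ) := by
            rw [Real.rpow_sub (by norm_num), h2p, h2q]
      _ = ((2:ℝ) ^ (p-q)) ^ ((17:ℕ):ℝ) := by rw [Real.rpow_natCast]
      _ = (2:ℝ) ^ ((p-q) * (17:ℕ)) := by rw [← Real.rpow_mul (by norm_num)]
      _ = ((2:ℝ) ^ ((17:ℕ):ℝ)) ^ (p-q) := by rw [mul_comm, Real.rpow_mul (by norm_num)]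
      _ = ((2:ℝ) ^ (17:ℕ)) ^ (p-q) := by rw [Real.rpow_natCast]
      _ ≤ X ^ (p-q) := Real.rpow_le_rpow (by positivity) hX17 (by linarith)
    have h2 : X ^ q * (b/a) ^ (17:ℕ) ≤ X ^ q * X ^ (p - q) :=
      mul_le_mul_of_nonneg_left hba (by positivity)
    have h3 : X ^ q * X ^ (p - q) = X ^ p := by
      rw [← Real.rpow_add hXpos]; ring_nf
    have h4 := mul_le_mul_of_nonneg_right (h3 ▸ h2) (show (0:ℝ) ≤ (a/b)^(17:ℕ) by positivity)
    calc X ^ q = X ^ q * (b/a) ^ (17:ℕ) * (a/b) ^ (17:ℕ) := by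
          field_simp
    _ ≤ X ^ p * (a/b) ^ (17:ℕ) := h4
  have hab_s : a / b = 1 - s := by
    rw [ha, hb, hs]; field_simp; ring
  -- middle term
  have hm0 : (0:ℝ) ≤ ((n/2:ℕ):ℝ) - d := by
    have h1 : d ≤ n/2 := Nat.le_div_iff_mul_le (by norm_num) |>.2 (by omega)
    have h2 : (d:ℝ) ≤ ((n/2:ℕ):ℝ) := by exact_mod_cast h1
    linarith
  have hmle : ((n/2:ℕ):ℝ) - d ≤ X/2 := by
    have h := Nat.cast_div_le (m := n) (n := 2) (α := ℝ)
    rw [hX]; push_cast at h ⊢; linarith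
  have hmid : (((n/2:ℕ):ℝ) - d) ^ p ≤ X ^ p * (8 * s) := by
    calc (((n/2:ℕ):ℝ) - d) ^ p ≤ (X/2) ^ p := Real.rpow_le_rpow hm0 hmle hp0
    _ = X ^ p / (2:ℝ) ^ p := Real.div_rpow (le_of_lt hXpos) (by norm_num) p
    _ = X ^ p * (8 * s) := by rw [h2p, hs]; field_simp
  -- tail: 2 ≤ 100 s^3 X^p
  have h14 : (17:ℝ)^(14:ℕ) ≤ b^(14:ℕ) := pow_le_pow_left₀ (by norm_num) hb17 14
  have hEq : 100 * s^3 * b^(17:ℕ) = (100/512) * b^(14:ℕ) := by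
    rw [hs]; field_simp; ring
  clear_value a b s X p q
  clear hb ha hs hX hp hq
  have htail : (2:ℝ) ≤ 100 * s^3 * X ^ p := by
    have hA : 100 * s^3 * b^(17:ℕ) ≤ 100 * s^3 * X^p :=
      mul_le_mul_of_nonneg_left hXp_big (by positivity)
    have h14' := mul_le_mul_of_nonneg_left h14 (show (0:ℝ) ≤ 100/512 by norm_num)
    have h2' : (2:ℝ) ≤ 100/512 * 17^(14:ℕ) := by norm_num
    linarith
  -- assemble
  have hpoly := poly_key s (le_of_lt hspos) hsle
  have hXppos : (0:ℝ) ≤ X ^ p := by positivity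
  rw [hab_s] at hfirst
  obtain ⟨c, hc⟩ : ∃ c, (1-s)^17 = c := ⟨_, rfl⟩
  rw [hc] at hfirst hpoly
  have hmain : X ^ p * (c + 16*s + 100*s^3) ≤ X ^ p * 1 :=
    mul_le_mul_of_nonneg_left hpoly hXppos
  have hmid2 : 2 * ((((n/2:ℕ):ℝ) - d) ^ p) ≤ X ^ p * (16 * s) := by linarith
  linarith [hfirst, hmid2, htail, hmain]
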